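/- Let R be a perfect ring of characteristic p, W(R) its ring of Witt vectors, and J ⊆ R an ideal with Φ(J) = J^p. Then the set [J] = { Σ_{i≥0} [r_i] p^i ∈ W(R) : all r_i ∈ J } (where [·] is the Teichmüller lift) is an ideal of W(R). -/

import Mathlib

open MvPolynomial Finset

section WHAux

variable {σ τ : Type*} {R : Type*} [CommSemiring R]

theorem isWH_pow {w : σ → ℕ} {φ : MvPolynomial σ R} {m : ℕ}
    (h : φ.IsWeightedHomogeneous w m) (k : ℕ) :
    (φ ^ k).IsWeightedHomogeneous w (k * m) := by
  induction k with
  | zero => simpa using isWeightedHomogeneous_one R w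
  | succ k ih =>
    rw [pow_succ, Nat.succ_mul]
    exact ih.mul h

theorem isWH_cast {w : σ → ℕ} {φ : MvPolynomial σ R} {m m' : ℕ}
    (h : φ.IsWeightedHomogeneous w m) (hm : m = m') :
    φ.IsWeightedHomogeneous w m' := hm ▸ h

theorem isWH_bind₁ {w : σ → ℕ} {w' : τ → ℕ} {g : σ → MvPolynomial τ R}
    (hg : ∀ s, (g s).IsWeightedHomogeneous w' (w s))
    {φ : MvPolynomial σ R} {m : ℕ} (hφ : φ.IsWeightedHomogeneous w m) :
    (bind₁ g φ).IsWeightedHomogeneous w' m := by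
  rw [bind₁, aeval_def, eval₂_eq]
  apply IsWeightedHomogeneous.sum
  intro d hd
  have hwd : Finsupp.weight w d = m := hφ (mem_support_iff.mp hd)
  have hprod : (∏ i ∈ d.support, g i ^ d i).IsWeightedHomogeneous w'
      (∑ i ∈ d.support, d i * w i) := by
    apply IsWeightedHomogeneous.prod
    intro i _
    exact isWH_pow (hg i) (d i)
  have hC : ((algebraMap R (MvPolynomial τ R)) (coeff d φ)).IsWeightedHomogeneous w' 0 := by
    rw [MvPolynomial.algebraMap_eq]; exact isWeightedHomogeneous_C w' _
  refine isWH_cast (hC.mul hprod) ?_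
  rw [zero_add, ← hwd, Finsupp.weight_apply, Finsupp.sum]
  simp [smul_eq_mul]

theorem isWH_rename {w' : τ → ℕ} (f : σ → τ) {φ : MvPolynomial σ R} {m : ℕ}
    (hφ : φ.IsWeightedHomogeneous (fun s => w' (f s)) m) :
    (rename f φ).IsWeightedHomogeneous w' m := by
  have : (rename f φ : MvPolynomial τ R) = bind₁ (fun s => (X (f s) : MvPolynomial τ R)) φ := by
    simp only [bind₁, rename]
    exact congrArg (fun g => g φ) (rename_eq_aeval f)
  rw [this]
  exact isWH_bind₁ (fun s => isWeightedHomogeneous_X R w' (f s)) hφ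

theorem isWH_of_weight_zero {w : σ → ℕ} (hw : ∀ s, w s = 0) (φ : MvPolynomial σ R) :
    φ.IsWeightedHomogeneous w 0 := by
  intro d _
  rw [Finsupp.weight_apply, Finsupp.sum]
  simp [hw]

theorem isWH_neg {A : Type*} [CommRing A] {w : σ → ℕ} {φ : MvPolynomial σ A} {m : ℕ}
    (h : φ.IsWeightedHomogeneous w m) : (-φ).IsWeightedHomogeneous w m := by
  intro d hd
  apply h
  simpa using hd

theorem isWH_of_map {S : Type*} [CommSemiring S] {f : R →+* S} (hf : Function.Injective f)
    {w : σ → ℕ} {m : ℕ} {φ : MvPolynomial σ R}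
    (h : (MvPolynomial.map f φ).IsWeightedHomogeneous w m) :
    φ.IsWeightedHomogeneous w m := by
  intro d hd
  apply h
  rw [coeff_map]
  intro h0
  exact hd (hf (h0.trans (map_zero f).symm))

end WHAux

section WittWH

variable (p : ℕ) [hp : Fact p.Prime]

theorem isWH_wittPolynomial (n : ℕ) :
    (wittPolynomial p ℚ n).IsWeightedHomogeneous (fun i => p ^ i) (p ^ n) := by
  rw [wittPolynomial]
  apply IsWeightedHomogeneous.sum
  intro i hi
  rw [Finset.mem_range] at hi
  apply isWeightedHomogeneous_monomial
  rw [Finsupp.weight_apply, Finsupp.sum_single_index]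
  · rw [smul_eq_mul, ← pow_add]
    congr 1
    omega
  · exact zero_smul _ _

theorem isWH_xInTermsOfW (n : ℕ) :
    (xInTermsOfW p ℚ n).IsWeightedHomogeneous (fun i => p ^ i) (p ^ n) := by
  induction n using Nat.strong_induction_on with
  | _ n ih =>
    rw [xInTermsOfW_eq]
    have hinner : (X n - ∑ i ∈ range n, C ((p : ℚ) ^ i) * xInTermsOfW p ℚ i ^ p ^ (n - i)
        : MvPolynomial ℕ ℚ).IsWeightedHomogeneous (fun i => p ^ i) (p ^ n) := by
      rw [sub_eq_add_neg]
      apply IsWeightedHomogeneous.add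
      · exact isWeightedHomogeneous_X ℚ _ n
      · apply isWH_neg
        apply IsWeightedHomogeneous.sum
        intro i hi
        rw [Finset.mem_range] at hi
        refine isWH_cast ((isWeightedHomogeneous_C _ _).mul
          (isWH_pow (ih i hi) (p ^ (n - i)))) ?_
        rw [zero_add, ← pow_add]
        congr 1
        omega
    refine isWH_cast (hinner.mul (isWeightedHomogeneous_C _ _)) (add_zero _)

theorem isWH_wittAdd (n : ℕ) :
    (WittVector.wittAdd p n).IsWeightedHomogeneous (fun s : Fin 2 × ℕ => p ^ s.2) (p ^ n) := by
  have hinj : Function.Injective (Int.castRingHom ℚ) := Int.cast_injective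
  apply isWH_of_map hinj
  rw [WittVector.wittAdd, map_wittStructureInt]
  have hmap : (MvPolynomial.map (Int.castRingHom ℚ)) (X 0 + X 1 : MvPolynomial (Fin 2) ℤ)
      = X 0 + X 1 := by simp
  rw [hmap, wittStructureRat]
  apply isWH_bind₁ (w := fun k => p ^ k) ?_ (isWH_xInTermsOfW p n)
  intro k
  rw [map_add, bind₁_X_right, bind₁_X_right]
  apply IsWeightedHomogeneous.add <;>
    exact isWH_rename _ (isWH_wittPolynomial p k)

theorem isWH_wittMul (n : ℕ) :
    (WittVector.wittMul p n).IsWeightedHomogeneous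
      (fun s : Fin 2 × ℕ => (s.1 : ℕ) * p ^ s.2) (p ^ n) := by
  have hinj : Function.Injective (Int.castRingHom ℚ) := Int.cast_injective
  apply isWH_of_map hinj
  rw [WittVector.wittMul, map_wittStructureInt]
  have hmap : (MvPolynomial.map (Int.castRingHom ℚ)) (X 0 * X 1 : MvPolynomial (Fin 2) ℤ)
      = X 0 * X 1 := by simp
  rw [hmap, wittStructureRat]
  apply isWH_bind₁ (w := fun k => p ^ k) ?_ (isWH_xInTermsOfW p n)
  intro k
  rw [map_mul, bind₁_X_right, bind₁_X_right]
  have h0 : ((rename (Prod.mk (0 : Fin 2))) (wittPolynomial p ℚ k)).IsWeightedHomogeneous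
      (fun s : Fin 2 × ℕ => (s.1 : ℕ) * p ^ s.2) 0 := by
    apply isWH_rename
    apply isWH_of_weight_zero
    intro s
    simp
  have h1 : ((rename (Prod.mk (1 : Fin 2))) (wittPolynomial p ℚ k)).IsWeightedHomogeneous
      (fun s : Fin 2 × ℕ => (s.1 : ℕ) * p ^ s.2) (p ^ k) := by
    apply isWH_rename
    have : (fun s : ℕ => ((1 : Fin 2) : ℕ) * p ^ s) = fun s => p ^ s := by
      funext s; simp
    rw [this]
    exact isWH_wittPolynomial p k
  exact isWH_cast (h0.mul h1) (zero_add _)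

end WittWH

section EvalAux

theorem aeval_mem_pow {σ : Type*} {A : Type*} [CommRing A] (J : Ideal A)
    {w : σ → ℕ} {φ : MvPolynomial σ ℤ} {m : ℕ}
    (hφ : φ.IsWeightedHomogeneous w m) (v : σ → A) (hv : ∀ s, v s ∈ J ^ (w s)) :
    aeval v φ ∈ J ^ m := by
  classical
  rw [aeval_def, eval₂_eq]
  apply Ideal.sum_mem
  intro d hd
  have hwd : Finsupp.weight w d = m := hφ (mem_support_iff.mp hd)
  have key : ∀ s : Finset σ, (∏ i ∈ s, v i ^ d i) ∈ J ^ (∑ i ∈ s, d i * w i) := by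
    intro s
    induction s using Finset.induction with
    | empty => simp [Ideal.one_eq_top]
    | insert _ _ hns ih =>
      rename_i a s'
      rw [Finset.prod_insert hns, Finset.sum_insert hns, pow_add]
      apply Ideal.mul_mem_mul ?_ ih
      have := Ideal.pow_mem_pow (hv a) (d a)
      rwa [← pow_mul, mul_comm (w a) (d a)] at this
  have : (∑ i ∈ d.support, d i * w i) = m := by
    rw [← hwd, Finsupp.weight_apply, Finsupp.sum]
    simp [smul_eq_mul]
  rw [← this]
  exact Ideal.mul_mem_left _ _ (key d.support)

end EvalAux

/-- Let `R` be a perfect ring of characteristic `p`, `W(R)` its ring of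
Witt vectors, and `J ⊆ R` an ideal with `Φ(J) = J^p` (the set of `p`-th powers of `J`
equals the ideal `J^p`).  Then the set
`[J] = { Σ_{i≥0} [r_i] p^i ∈ W(R) : all r_i ∈ J }` — described via Witt coordinates as
the set of Witt vectors whose `i`-th coordinate is a `p^i`-th power of an element of
`J` — is an ideal of `W(R)`. -/
theorem stmt_3 (p : ℕ) [Fact p.Prime] (R : Type*) [CommRing R] [CharP R p]
    (hperf : Function.Bijective (fun x : R => x ^ p))
    (J : Ideal R)
    (hJ : ((J ^ p : Ideal R) : Set R) = (fun x => x ^ p) '' (J : Set R)) :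
    ∃ I : Ideal (WittVector p R),
      (I : Set (WittVector p R)) =
        {w : WittVector p R | ∀ i : ℕ, ∃ r ∈ J, r ^ p ^ i = w.coeff i} := by
  classical
  have hp : p.Prime := Fact.out
  -- the Frobenius ring homomorphism
  let e : R →+* R :=
    { toFun := fun x => x ^ p
      map_one' := one_pow p
      map_mul' := fun x y => mul_pow x y p
      map_zero' := zero_pow hp.ne_zero
      map_add' := fun x y => add_pow_char x y p }
  have he : ∀ x, e x = x ^ p := fun _ => rfl
  have hes : Function.Surjective e := hperf.2
  have hmap : Ideal.map e J = J ^ p := by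
    ext x
    rw [Ideal.mem_map_iff_of_surjective e hes]
    constructor
    · rintro ⟨y, hy, rfl⟩
      have : e y ∈ ((J ^ p : Ideal R) : Set R) := by
        rw [hJ]; exact ⟨y, hy, (he y).symm⟩
      exact this
    · intro hx
      have : x ∈ (fun x : R => x ^ p) '' (J : Set R) := by rw [← hJ]; exact hx
      obtain ⟨y, hy, rfl⟩ := this
      exact ⟨y, hy, he y⟩
  -- key: J^(p^n) is exactly the set of p^n-th powers of J
  have key : ∀ n : ℕ, ((J ^ p ^ n : Ideal R) : Set R) = (fun x : R => x ^ p ^ n) '' (J : Set R) := by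
    intro n
    induction n with
    | zero => simp
    | succ n ih =>
      have h1 : (J ^ p ^ (n + 1) : Ideal R) = Ideal.map e (J ^ p ^ n) := by
        rw [Ideal.map_pow, hmap, ← pow_mul, pow_succ, mul_comm]
      rw [h1]
      ext x
      rw [SetLike.mem_coe, Ideal.mem_map_iff_of_surjective e hes]
      constructor
      · rintro ⟨y, hy, rfl⟩
        have : y ∈ (fun x : R => x ^ p ^ n) '' (J : Set R) := by
          rw [← ih]; exact hy
        obtain ⟨r, hr, rfl⟩ := this
        exact ⟨r, hr, by rw [he, ← pow_mul, ← pow_succ]⟩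
      · rintro ⟨r, hr, rfl⟩
        refine ⟨r ^ p ^ n, ?_, by rw [he, ← pow_mul, ← pow_succ]⟩
        have : r ^ p ^ n ∈ (fun x : R => x ^ p ^ n) '' (J : Set R) := ⟨r, hr, rfl⟩
        rw [← ih] at this
        exact this
  -- membership rephrasing
  have hmem : ∀ (w : WittVector p R) (i : ℕ),
      (w.coeff i ∈ J ^ p ^ i) ↔ ∃ r ∈ J, r ^ p ^ i = w.coeff i := by
    intro w i
    rw [← SetLike.mem_coe, key i]
    constructor
    · rintro ⟨r, hr, h⟩; exact ⟨r, hr, h⟩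
    · rintro ⟨r, hr, h⟩; exact ⟨r, hr, h⟩
  -- the carrier
  set Icar : Set (WittVector p R) := {w | ∀ i : ℕ, w.coeff i ∈ J ^ p ^ i} with hIcar
  have hzero : (0 : WittVector p R) ∈ Icar := by
    intro i
    rw [WittVector.zero_coeff]
    exact Ideal.zero_mem _
  have hadd : ∀ x y : WittVector p R, x ∈ Icar → y ∈ Icar → x + y ∈ Icar := by
    intro x y hx hy i
    rw [WittVector.add_coeff]
    show aeval (Function.uncurry ![x.coeff, y.coeff]) (WittVector.wittAdd p i) ∈ J ^ p ^ i
    apply aeval_mem_pow J (isWH_wittAdd p i)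
    rintro ⟨b, j⟩
    fin_cases b
    · simpa [Function.uncurry] using hx j
    · simpa [Function.uncurry] using hy j
  have hsmul : ∀ c x : WittVector p R, x ∈ Icar → c * x ∈ Icar := by
    intro c x hx i
    rw [WittVector.mul_coeff]
    show aeval (Function.uncurry ![c.coeff, x.coeff]) (WittVector.wittMul p i) ∈ J ^ p ^ i
    apply aeval_mem_pow J (isWH_wittMul p i)
    rintro ⟨b, j⟩
    fin_cases b
    · simpa [Function.uncurry, Ideal.one_eq_top] using trivial
    · simpa [Function.uncurry] using hx j
  refine ⟨{ carrier := Icar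
            zero_mem' := hzero
            add_mem' := fun {a b} ha hb => hadd a b ha hb
            smul_mem' := fun c x hx => by
              simpa [smul_eq_mul] using hsmul c x hx }, ?_⟩
  ext w
  constructor
  · intro hw i
    exact (hmem w i).mp (hw i)
  · intro hw i
    exact (hmem w i).mpr (hw i)
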